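/- Let a > 0 and b > 0 be real numbers and set c = 6a/b. Define v(τ) = c·sinh⁻²((√a)·τ/2 + log(1+√2)) for τ ≥ 0. Then: (i) v(0) = c; (ii) for every τ > 0, (v'(τ))² = (1/6)·b·v(τ)²·(v(τ) + c); and (iii) for every τ > 0, v'(τ) = −(v(τ)/√6)·√(b·(v(τ) + c)). -/

import Mathlib

/-- For `a > 0`, `b > 0`, `c = 6a/b`, the peakon half-profile
`v(τ) = c sinh⁻²(√a τ/2 + log(1+√2))` satisfies `v(0) = c`, and for `τ > 0` the
first-order equations `(v')² = (1/6) b v² (v + c)` and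
`v' = −(v/√6)√(b(v + c))`. -/
theorem peakon_half_profile_first_order (a b : ℝ) (ha : 0 < a) (hb : 0 < b)
    (c : ℝ) (hc : c = 6 * a / b) (v : ℝ → ℝ)
    (hv : v = fun τ =>
      c / (Real.sinh (Real.sqrt a * τ / 2 + Real.log (1 + Real.sqrt 2))) ^ 2) :
    v 0 = c ∧
    (∀ τ : ℝ, 0 < τ →
      (deriv v τ) ^ 2 = (1 / 6) * b * (v τ) ^ 2 * (v τ + c)) ∧
    (∀ τ : ℝ, 0 < τ →
      deriv v τ = -(v τ / Real.sqrt 6) * Real.sqrt (b * (v τ + c))) := by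
  have hlog : 0 < Real.log (1 + Real.sqrt 2) := by
    apply Real.log_pos
    nlinarith [Real.sqrt_pos.mpr (by norm_num : (0:ℝ) < 2)]
  have hsinh0 : Real.sinh (Real.log (1 + Real.sqrt 2)) = 1 := by
    have h2 : (0:ℝ) < 1 + Real.sqrt 2 := by positivity
    rw [Real.sinh_eq, Real.exp_log h2, Real.exp_neg, Real.exp_log h2]
    have hs2 : Real.sqrt 2 ^ 2 = 2 := Real.sq_sqrt (by norm_num)
    field_simp
    nlinarith [hs2]
  -- general derivative fact
  have hu : ∀ τ : ℝ, 0 < τ →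
      0 < Real.sinh (Real.sqrt a * τ / 2 + Real.log (1 + Real.sqrt 2)) := by
    intro τ hτ
    apply Real.sinh_pos_iff.mpr
    have := Real.sqrt_pos.mpr ha
    positivity
  have hderiv : ∀ τ : ℝ, 0 < τ →
      deriv v τ = -(c * Real.sinh (Real.sqrt a * τ / 2 + Real.log (1 + Real.sqrt 2))
        * Real.cosh (Real.sqrt a * τ / 2 + Real.log (1 + Real.sqrt 2)) * Real.sqrt a)
        / (Real.sinh (Real.sqrt a * τ / 2 + Real.log (1 + Real.sqrt 2))) ^ 4 := by
    intro τ hτ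
    set u := Real.sqrt a * τ / 2 + Real.log (1 + Real.sqrt 2) with hu_def
    have hS := hu τ hτ
    have hlin : HasDerivAt (fun t : ℝ => Real.sqrt a * t / 2 + Real.log (1 + Real.sqrt 2))
        (Real.sqrt a / 2) τ := by
      have h1 : HasDerivAt (fun t : ℝ => Real.sqrt a * t) (Real.sqrt a) τ := by
        simpa using (hasDerivAt_id τ).const_mul (Real.sqrt a)
      simpa using (h1.div_const 2).add_const (Real.log (1 + Real.sqrt 2))
    have hs : HasDerivAt (fun t : ℝ => Real.sinh (Real.sqrt a * t / 2 + Real.log (1 + Real.sqrt 2)))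
        (Real.cosh u * (Real.sqrt a / 2)) τ := hlin.sinh
    have hpow : HasDerivAt (fun t : ℝ =>
        (Real.sinh (Real.sqrt a * t / 2 + Real.log (1 + Real.sqrt 2))) ^ 2)
        (2 * (Real.sinh u) ^ 1 * (Real.cosh u * (Real.sqrt a / 2))) τ := hs.pow 2
    have hne : (Real.sinh u) ^ 2 ≠ 0 := by positivity
    have hdiv : HasDerivAt v
        ((0 * (Real.sinh u) ^ 2 - c * (2 * (Real.sinh u) ^ 1 * (Real.cosh u * (Real.sqrt a / 2))))
          / ((Real.sinh u) ^ 2) ^ 2) τ := by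
      rw [hv]
      exact (hasDerivAt_const τ c).div hpow hne
    rw [hdiv.deriv]
    ring
  refine ⟨?_, ?_, ?_⟩
  · rw [hv]; simp [hsinh0]
  · intro τ hτ
    have hS := hu τ hτ
    have hbc : b * c = 6 * a := by rw [hc]; field_simp
    have hsq : Real.sqrt a * Real.sqrt a = a := Real.mul_self_sqrt ha.le
    rw [hderiv τ hτ, hv]
    simp only
    set u := Real.sqrt a * τ / 2 + Real.log (1 + Real.sqrt 2) with hu_def
    set S := Real.sinh u with hS_def
    set C := Real.cosh u with hC_def
    have hcosh : C ^ 2 = 1 + S ^ 2 := by rw [hC_def, Real.cosh_sq]; ring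
    have hSne : S ≠ 0 := ne_of_gt hS
    field_simp
    ring_nf
    simp only [Real.sq_sqrt ha.le]
    linear_combination (6*a*c^2) * hcosh - c^2*(1+S^2) * hbc
  · intro τ hτ
    have hS := hu τ hτ
    have hbc : b * c = 6 * a := by rw [hc]; field_simp
    have hsq : Real.sqrt a * Real.sqrt a = a := Real.mul_self_sqrt ha.le
    have h6 : Real.sqrt 6 * Real.sqrt 6 = 6 := Real.mul_self_sqrt (by norm_num)
    have h6pos : 0 < Real.sqrt 6 := Real.sqrt_pos.mpr (by norm_num)
    have hsqrt : Real.sqrt (b * (v τ + c))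
        = Real.sqrt 6 * Real.sqrt a
          * Real.cosh (Real.sqrt a * τ / 2 + Real.log (1 + Real.sqrt 2))
          / Real.sinh (Real.sqrt a * τ / 2 + Real.log (1 + Real.sqrt 2)) := by
      have harg : b * (v τ + c)
          = (Real.sqrt 6 * Real.sqrt a
              * Real.cosh (Real.sqrt a * τ / 2 + Real.log (1 + Real.sqrt 2))
              / Real.sinh (Real.sqrt a * τ / 2 + Real.log (1 + Real.sqrt 2))) ^ 2 := by
        rw [hv]
        simp only
        set u := Real.sqrt a * τ / 2 + Real.log (1 + Real.sqrt 2) with hu_def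
        set S := Real.sinh u with hS_def
        set C := Real.cosh u with hC_def
        have hcosh : C ^ 2 = 1 + S ^ 2 := by rw [hC_def, Real.cosh_sq]; ring
        have hSne : S ≠ 0 := ne_of_gt hS
        field_simp
        ring_nf
        simp only [Real.sq_sqrt ha.le, Real.sq_sqrt (by norm_num : (0:ℝ) ≤ 6)]
        linear_combination (-6*a) * hcosh + (1+S^2) * hbc
      rw [harg, Real.sqrt_sq (by positivity)]
    rw [hderiv τ hτ, hsqrt, hv]
    simp only
    set u := Real.sqrt a * τ / 2 + Real.log (1 + Real.sqrt 2) with hu_def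
    have hSne : Real.sinh u ≠ 0 := ne_of_gt hS
    field_simp
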